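/- Let F be the finite field with 125 elements. The 4th power Paley digraph G_4(125), with vertex set F and an edge a → b if and only if b − a is a nonzero 4th power in F, contains no transitive subtournament of order 4; that is, there are no four distinct elements a_1, a_2, a_3, a_4 of F such that a_j − a_i is a nonzero 4th power for all 1 ≤ i < j ≤ 4. -/

import Mathlib

set_option maxRecDepth 40000 in
set_option maxHeartbeats 4000000 in
private lemma keyA {F : Type} [CommRing F] (h5 : (5:F) = 0) (x : F)
    (h1 : x^31 = 1) (h2 : (x-1)^31 = 1) : x^6 + 2*x^4 + 2*x + 1 = 0 := by
  linear_combination (-2*x^23 + 1*x^22 + 2*x^21 - 1*x^20 + 1*x^19 + 2*x^16 + 1*x^15 - 1*x^14 + 1*x^12 - 2*x^10 + 2*x^9 - 2*x^7 + 2*x^6 + 2*x^5 + 2*x^4 - 1*x^3 - 1*x^2 + 2*x + 1) * h1 + (2*x^23 + 1*x^22 - 1*x^21 - 1*x^19 + 1*x^18 + 1*x^16 + 1*x^15 + 1*x^14 - 2*x^13 + 1*x^12 + 2*x^11 - 1*x^10 + 2*x^9 - 1*x^8 - 1*x^7 - 2*x^6 - 2*x^5 - 1*x^4 + 2*x^3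 - 2*x^2 - 1) * h2 + (12*x^53 - 180*x^52 + 1699*x^51 - 11594*x^50 + 60766*x^49 - 254138*x^48 + 869599*x^47 - 2475121*x^46 + 5920008*x^45 - 11949055*x^44 + 20287807*x^43 - 28510874*x^42 + 31611457*x^41 - 23269909*x^40 - 1147378*x^39 + 41382037*x^38 - 91156895*x^37 + 140365985*x^36 - 179512686*x^35 + 203550501*x^34 - 212493827*x^33 + 208369302*x^32 - 190893474*x^31 + 155693129*x^30 - 97424537*x^29 + 16208071*x^28 + 77730237*x^27 - 165985067*x^26 + 230524463*x^25 - 263452229*x^24 + 271059369*x^23 - 269124813*x^22 + 272592889*x^21 - 286501312*x^20 + 303839159*x^19 - 311075123*x^18 + 297087043*x^17 - 259582926*x^16 + 205603266*x^15 - 147012825*x^14 + 94689152*x^13 - 54823642*x^12 + 28448149*x^11 - 13168838*x^10 + 5401466*x^9 - 1944897*x^8 + 607190*x^7 - 161721*x^6 + 35972*x^5 - 6491*x^4 + 912*x^3 - 94*x^2 + 7*x) * h5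

set_option maxHeartbeats 8000000 in
set_option maxRecDepth 40000 in
private lemma keyB {F : Type} [CommRing F] [Nontrivial F] (h5 : (5:F) = 0) (x y : F)
    (hgx : x^6 + 2*x^4 + 2*x + 1 = 0) (hgy : y^6 + 2*y^4 + 2*y + 1 = 0)
    (hz : (y - x)^31 = 1) : False := by
  have h01 : (0:F) = 1 := by
    linear_combination (-2*x^30*y^5 - 2*x^30*y^3 - 1*x^30*y^2 - 2*x^30*y + 1*x^30 + 2*x^29*y^6 - 2*x^29*y^4 - 2*x^29*y^3 - 1*x^29*y^2 - 2*x^29*y + 1*x^29 - 1*x^28*y^5 + 2*x^28*y^4 + 1*x^28*y^3 - 2*x^27*y^5 - 2*x^27*y^4 - 1*x^27*y^3 + 2*x^27*y^2 - 2*x^26*y^6 + 1*x^26*y^5 + 2*x^26*y^4 - 2*x^26*y^3 - 1*x^26*y^2 - 2*x^26 + 2*x^25*y^10 + 2*x^25*y^8 + 1*x^25*y^7 + 2*x^25*y^5 + 2*x^25*y - 2*x^24*y^11 + 2*x^24*y^9 + 2*x^24*y^8 + 1*x^24*y^7 - 1*x^24*y^6 + 1*x^24*y^5 - 1*x^24*y^4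 + 1*x^24*y^3 - 1*x^24*y^2 - 1*x^24*y + 1*x^24 + 1*x^23*y^10 - 2*x^23*y^9 - 1*x^23*y^8 + 2*x^23*y^6 + 1*x^23*y^5 - 2*x^23*y^4 + 1*x^23*y^2 - 2*x^23*y - 1*x^23 + 2*x^22*y^10 + 2*x^22*y^9 + 1*x^22*y^8 - 2*x^22*y^7 + 1*x^22*y^6 + 1*x^22*y^5 - 1*x^22*y^4 - 1*x^22*y^3 - 2*x^22*y^2 + 2*x^22*y - 2*x^22 + 2*x^21*y^11 - 1*x^21*y^10 - 2*x^21*y^9 + 2*x^21*y^8 + 1*x^21*y^7 + 2*x^21*y^4 - 2*x^21*y^2 - 1*x^21*y + 1*x^21 + 2*x^20*y^11 + 2*x^20*y^10 + 2*x^20*y^6 + 1*x^20*y^5 - 1*x^20*y^3 + 2*x^20*y + 1*x^20 - 2*x^19*y^11 - 2*x^19*y^10 + 1*x^19*y^9 - 1*x^19*y^8 + 1*x^19*y^7 - 1*x^19*y^6 + 1*x^19*y^5 - 2*x^19*y^4 - 2*x^19*y^3 + 1*x^19*y^2 + 2*x^19*y + 1*x^19 - 2*x^18*y^11 - 1*x^18*y^10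 + 2*x^18*y^9 - 1*x^18*y^7 - 2*x^18*y^6 + 1*x^18*y^3 - 1*x^18*y^2 + 1*x^18*y - 1*x^18 - 1*x^17*y^11 - 1*x^17*y^10 + 1*x^17*y^9 + 1*x^17*y^8 + 2*x^17*y^7 - 2*x^17*y^6 - 2*x^17*y^4 + 1*x^17*y^3 + 1*x^17*y^2 - 1*x^17*y - 2*x^17 + 2*x^16*y^10 - 2*x^16*y^9 + 2*x^16*y^7 - 2*x^16*y^6 - 1*x^16*y^5 + 2*x^16*y^4 - 1*x^16*y^3 - 2*x^16*y^2 - 2*x^16*y + 2*x^16 + 1*x^15*y^11 - 1*x^15*y^10 + 1*x^15*y^8 - 2*x^15*y^5 + 2*x^15*y^4 - 1*x^15*y + 1*x^15 + 2*x^14*y^11 - 2*x^14*y^10 + 2*x^14*y^9 + 2*x^14*y^8 - 1*x^14*y^7 - 1*x^14*y^6 - 1*x^14*y^5 + 2*x^14*y^3 + 2*x^14*y^2 - 2*x^14*y - 2*x^14 - 1*x^13*y^11 + 1*x^13*y^10 - 1*x^13*y^8 + 1*x^13*y^7 - 2*x^13*y^5 - 2*x^13*y^4 + 1*x^13*y^2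 - 2*x^13*y - 1*x^13 + 2*x^12*y^10 + 2*x^12*y^9 - 1*x^12*y^8 - 1*x^12*y^7 - 2*x^12*y^6 + 2*x^12*y^5 - 1*x^12*y^4 - 2*x^12*y^3 - 1*x^12 - 2*x^11*y^11 - 2*x^11*y^9 + 1*x^11*y^8 + 2*x^11*y^7 + 1*x^11*y^6 + 1*x^11*y^5 + 2*x^11*y^4 + 1*x^11*y^3 + 1*x^11*y^2 - 1*x^11*y - 2*x^10*y^11 + 1*x^10*y^10 - 2*x^10*y^9 + 1*x^10*y^6 + 1*x^10*y^5 + 1*x^10*y^4 + 2*x^10*y^2 - 1*x^10*y - 2*x^10 - 1*x^9*y^11 - 2*x^9*y^8 - 2*x^9*y^7 + 2*x^9*y^5 - 1*x^9*y^4 - 1*x^9*y^3 - 1*x^9*y^2 + 2*x^9*y - 2*x^9 - 1*x^8*y^11 - 2*x^8*y^10 + 2*x^8*y^9 - 1*x^8*y^7 - 1*x^8*y^6 - 2*x^8*y^5 + 2*x^8*y^4 - 2*x^8*y^3 + 2*x^8*y^2 - 2*x^8*y - 2*x^8 - 2*x^7*y^11 + 1*x^7*y^9 + 2*x^7*y^8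 - 1*x^7*y^6 - 1*x^7*y^5 + 1*x^7*y^4 + 1*x^7*y^3 + 1*x^7*y^2 - 2*x^7*y + 2*x^7 + 1*x^6*y^11 + 2*x^6*y^10 - 2*x^6*y^9 - 1*x^6*y^8 - 1*x^6*y^7 + 2*x^6*y^6 - 2*x^6*y^4 - 1*x^6*y^3 - 1*x^6*y^2 + 1*x^6*y + 2*x^5*y^30 + 2*x^5*y^28 + 1*x^5*y^27 + 2*x^5*y^26 - 1*x^5*y^25 - 2*x^5*y^10 - 1*x^5*y^9 - 2*x^5*y^7 - 1*x^5*y^6 - 1*x^5*y^5 - 1*x^5*y^4 + 2*x^5*y^3 - 2*x^5*y^2 + 2*x^5*y - 2*x^4*y^31 + 2*x^4*y^29 + 2*x^4*y^28 + 1*x^4*y^27 + 2*x^4*y^26 - 1*x^4*y^25 + 2*x^4*y^11 + 1*x^4*y^9 + 1*x^4*y^8 + 1*x^4*y^7 - 1*x^4*y^3 + 2*x^4*y^2 + 1*x^4 + 1*x^3*y^30 - 2*x^3*y^29 - 1*x^3*y^28 - 2*x^3*y^11 - 2*x^3*y^10 - 2*x^3*y^9 + 2*x^3*y^8 - 2*x^3*y^7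 - 1*x^3*y^6 - 1*x^3*y^5 - 1*x^3*y^4 + 1*x^3*y^3 + 1*x^3*y^2 - 2*x^3*y + 1*x^3 + 2*x^2*y^30 + 2*x^2*y^29 + 1*x^2*y^28 - 2*x^2*y^27 + 1*x^2*y^11 + 2*x^2*y^10 - 1*x^2*y^9 - 1*x^2*y^8 - 1*x^2*y^7 - 2*x^2*y^6 - 1*x^2*y^5 + 1*x^2*y^4 + 2*x^2*y^3 + 2*x^2*y^2 + 1*x^2*y + 1*x^2 + 2*x*y^31 - 1*x*y^30 - 2*x*y^29 + 2*x*y^28 + 1*x*y^27 + 2*x*y^25 - 1*x*y^11 + 2*x*y^9 + 1*x*y^8 + 1*x*y^7 - 1*x*y^6 - 2*x*y^5 - 1*x*y^3 - 1*x*y^2 - 1*x*y + 1*x - 2*y^35 - 2*y^33 - 1*y^32 - 2*y^30 - 2*y^26 + 2*y^11 - 2*y^10 + 1*y^9 - 2*y^8 + 2*y^7 - 1*y^6 - 1*y^5 + 2*y^4 - 2*y^3 + 1*y^2 - 2*y - 2) * hgx + (2*x^5*y^30 - 1*x^5*y^28 - 2*x^5*y^27 + 1*x^5*y^26 + 1*x^5*y^25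 + 1*x^5*y^23 - 1*x^5*y^22 - 1*x^5*y^21 - 2*x^5*y^18 + 1*x^5*y^17 + 2*x^5*y^16 - 1*x^5*y^15 + 1*x^5*y^14 + 1*x^5*y^13 - 2*x^5*y^12 - 2*x^5*y^11 - 1*x^5*y^10 - 2*x^5*y^9 - 1*x^5*y^8 + 2*x^5*y^7 - 2*x^5*y^6 - 2*x^5*y^5 + 1*x^5*y^4 - 2*x^5*y^3 + 1*x^5*y^2 - 1*x^5*y + 2*x^5 - 1*x^4*y^29 + 2*x^4*y^28 - 2*x^4*y^27 + 1*x^4*y^26 + 2*x^4*y^25 - 1*x^4*y^24 - 1*x^4*y^22 - 1*x^4*y^21 - 1*x^4*y^20 - 2*x^4*y^19 - 2*x^4*y^18 + 1*x^4*y^17 + 2*x^4*y^16 + 1*x^4*y^15 + 1*x^4*y^14 - 1*x^4*y^13 - 2*x^4*y^12 + 2*x^4*y^11 - 2*x^4*y^9 + 1*x^4*y^8 - 1*x^4*y^7 + 1*x^4*y^6 - 2*x^4*y^5 - 2*x^4*y + 2*x^4 - 1*x^3*y^30 - 2*x^3*y^29 + 1*x^3*y^28 - 1*x^3*y^27 -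 2*x^3*y^26 + 1*x^3*y^24 - 2*x^3*y^23 - 2*x^3*y^22 - 2*x^3*y^21 + 1*x^3*y^20 + 2*x^3*y^19 + 1*x^3*y^18 + 2*x^3*y^17 - 1*x^3*y^16 + 1*x^3*y^15 + 2*x^3*y^14 - 1*x^3*y^13 + 1*x^3*y^12 + 2*x^3*y^11 + 2*x^3*y^10 + 1*x^3*y^9 + 1*x^3*y^8 + 2*x^3*y^7 - 2*x^3*y^6 - 2*x^3*y^4 + 1*x^3*y^3 - 1*x^3*y^2 - 1*x^3*y - 1*x^3 - 2*x^2*y^30 - 1*x^2*y^29 + 2*x^2*y^27 - 1*x^2*y^26 + 1*x^2*y^25 - 1*x^2*y^24 + 1*x^2*y^23 - 2*x^2*y^22 - 2*x^2*y^21 - 2*x^2*y^20 + 1*x^2*y^19 - 2*x^2*y^18 + 1*x^2*y^17 - 1*x^2*y^15 - 1*x^2*y^11 + 2*x^2*y^10 - 2*x^2*y^9 + 1*x^2*y^8 - 1*x^2*y^7 + 2*x^2*y^3 + 1*x^2*y - 1*x^2 - 2*x*y^30 - 1*x*y^29 - 1*x*y^26 - 2*x*y^24 - 2*x*y^23 +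 2*x*y^22 + 1*x*y^20 + 2*x*y^19 - 1*x*y^18 - 1*x*y^17 - 2*x*y^12 + 1*x*y^11 - 1*x*y^10 - 2*x*y^9 + 2*x*y^8 - 2*x*y^7 + 1*x*y^6 + 2*x*y^5 + 2*x*y^4 + 1*x*y^2 + 1*x + 2*y^30 - 1*y^29 - 1*y^25 + 2*y^24 - 2*y^23 + 1*y^22 - 1*y^21 + 2*y^20 - 1*y^19 - 2*y^18 + 2*y^17 - 2*y^15 - 1*y^13 - 2*y^12 - 2*y^10 + 2*y^9 + 1*y^8 + 1*y^7 - 1*y^2 + 2*y - 2) * hgy + (-2*x^5*y^5 - 2*x^5*y^3 - 1*x^5*y^2 - 2*x^5*y + 1*x^5 + 1*x^4*y^4 + 2*x^4*y^3 + 2*x^4*y^2 - 1*x^4*y + 1*x^4 + 1*x^3*y^5 - 1*x^3*y^4 - 1*x^3*y^3 + 2*x^3*y^2 + 2*x^3*y + 2*x^3 + 2*x^2*y^5 - 2*x^2*y^4 + 2*x^2*y^3 + 2*x^2*y^2 - 2*x^2*y + 2*x^2 + 2*x*y^5 - 2*x*y^4 + 2*x*y^3 + 2*x*y^2 + 2*x*y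 - 2*x - 2*y^5 - 2*y^4 + 1*y^3 - 1*y^2 + 1*y + 2) * hz + (12*x^35*y^6 + 13*x^35*y^4 + 7*x^35*y^3 + 13*x^35*y^2 - 6*x^35*y - 186*x^34*y^7 - 191*x^34*y^5 - 106*x^34*y^4 - 198*x^34*y^3 + 100*x^34*y^2 - 5*x^34*y + 1798*x^33*y^8 + 1884*x^33*y^6 + 1092*x^33*y^5 + 1991*x^33*y^4 - 1003*x^33*y^3 + 81*x^33*y^2 - 12*x^33*y - 12586*x^32*y^9 - 13392*x^32*y^7 - 8196*x^32*y^6 - 14464*x^32*y^5 + 7364*x^32*y^4 - 725*x^32*y^3 + 199*x^32*y^2 - 12*x^32*y + 67964*x^31*y^10 + 73358*x^31*y^8 + 47653*x^31*y^7 + 81251*x^31*y^6 - 41874*x^31*y^5 + 4669*x^31*y^4 - 1995*x^31*y^3 + 173*x^31*y^2 + 13*x^31*y - 294512*x^30*y^11 - 322202*x^30*y^9 - 223312*x^30*y^8 - 366786*x^30*y^7 + 191853*x^30*y^6 - 22996*x^30*y^5 + 14564*x^30*y^4 - 1604*x^30*y^3 - 191*x^30*y^2 - 11*x^30*y + 1051830*x^29*y^12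 + 1165103*x^29*y^10 + 866996*x^29*y^9 + 1365940*x^29*y^8 - 726938*x^29*y^7 + 89893*x^29*y^6 - 82256*x^29*y^5 + 10695*x^29*y^4 + 1891*x^29*y^3 + 186*x^29*y^2 - 3155490*x^28*y^13 - 3534148*x^28*y^11 - 2844796*x^28*y^10 - 4274027*x^28*y^9 + 2319419*x^28*y^8 - 284983*x^28*y^7 + 374164*x^28*y^6 - 54479*x^28*y^5 - 13484*x^28*y^4 - 1798*x^28*y^3 + 8064030*x^27*y^14 + 9115860*x^27*y^12 + 8007932*x^27*y^11 + 11382958*x^27*y^10 - 6311698*x^27*y^9 + 739877*x^27*y^8 - 1408014*x^27*y^7 + 220255*x^27*y^6 + 74257*x^27*y^5 + 12586*x^27*y^4 + 1*x^27*y^3 + 1*x^27*y + 1*x^27 - 17740866*x^26*y^15 - 20195136*x^26*y^13 - 19564038*x^26*y^12 - 26036299*x^26*y^11 + 14779558*x^26*y^10 - 1565879*x^26*y^9 + 4467849*x^26*y^8 - 723335*x^26*y^7 - 328495*x^26*y^6 - 67966*x^26*y^5 + 1*x^26*y^3 + 1*x^26*y^2 - 2*x^26*y + 1*x^26 + 33868926*x^25*y^16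 + 38707344*x^25*y^14 + 41862834*x^25*y^13 + 51434487*x^25*y^12 - 29956118*x^25*y^11 + 2615551*x^25*y^10 - 12124094*x^25*y^9 + 1956402*x^25*y^8 + 1199085*x^25*y^7 + 294513*x^25*y^6 - 1*x^25*y^5 + 1*x^25*y^2 - 1*x^25 - 56448210*x^24*y^17 - 64512240*x^24*y^15 - 79027494*x^24*y^14 - 87968049*x^24*y^13 + 52731744*x^24*y^12 - 3050307*x^24*y^11 + 28434470*x^24*y^10 - 4382625*x^24*y^9 - 3681405*x^24*y^8 - 1051830*x^24*y^7 - 1*x^24*y^6 - 1*x^24*y^5 + 1*x^24*y^4 + 82501230*x^23*y^18 + 93790872*x^23*y^16 + 132374154*x^23*y^15 + 130079007*x^23*y^14 - 80694240*x^23*y^13 + 876525*x^23*y^12 - 58096076*x^23*y^11 + 8099091*x^23*y^10 + 9641774*x^23*y^9 + 3155490*x^23*y^8 - 1*x^23*y^5 + 2*x^23*y^4 + 1*x^23*y^3 - 1*x^23*y + 1*x^23 - 106073010*x^22*y^19 - 119099520*x^22*y^17 - 197630766*x^22*y^16 - 165188553*x^22*y^15 + 107189568*x^22*y^14 + 7133565*x^22*y^13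 + 104025987*x^22*y^12 - 12096045*x^22*y^11 - 21772881*x^22*y^10 - 8064030*x^22*y^9 - 1*x^22*y^8 + 1*x^22*y^6 - 1*x^22*y^4 + 2*x^22*y^2 + 120216078*x^21*y^20 + 132001968*x^21*y^18 + 263879874*x^21*y^17 + 177222567*x^21*y^16 - 123069504*x^21*y^15 - 24626307*x^21*y^14 - 163947933*x^21*y^13 + 13708851*x^21*y^12 + 42739358*x^21*y^11 + 17740866*x^21*y^10 - 1*x^21*y^8 - 1*x^21*y^7 - 120216078*x^20*y^21 - 127287612*x^20*y^19 - 315861852*x^20*y^18 - 154519221*x^20*y^17 + 121208574*x^20*y^16 + 53780877*x^20*y^15 + 228087987*x^20*y^14 - 9118557*x^20*y^13 - 73382673*x^20*y^12 - 33868926*x^20*y^11 - 1*x^20*y^7 + 1*x^20*y^6 + 1*x^20*y^3 - 1*x^20 + 106073010*x^19*y^22 + 106073010*x^19*y^20 + 339433632*x^19*y^19 + 97822887*x^19*y^18 - 101234592*x^19*y^17 - 92984469*x^19*y^16 - 280566213*x^19*y^15 - 4652325*x^19*y^14 + 110725335*x^19*y^13 + 56448210*x^19*y^12 + 1*x^19*y^11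 + 1*x^19*y^10 - 1*x^19*y^9 + 1*x^19*y^6 + 1*x^19*y^5 - 82501230*x^18*y^23 - 75429696*x^18*y^21 - 327647742*x^18*y^20 - 22393191*x^18*y^19 + 70715340*x^18*y^18 + 135537735*x^18*y^17 + 305254551*x^18*y^16 + 27107547*x^18*y^15 - 147323625*x^18*y^14 - 82501230*x^18*y^13 + 1*x^18*y^10 - 2*x^18*y^9 - 1*x^18*y^8 + 2*x^18*y^6 + 1*x^18*y^4 - 1*x^18*y^3 - 1*x^18*y^2 + 1*x^18*y + 2*x^18 + 56448210*x^17*y^24 + 44662320*x^17*y^22 + 283977918*x^17*y^21 - 48446211*x^17*y^20 - 41188584*x^17*y^19 - 170895405*x^17*y^18 - 293468661*x^17*y^17 - 53036505*x^17*y^16 + 173252583*x^17*y^15 + 106073010*x^17*y^14 + 1*x^17*y^11 - 1*x^17*y^10 + 1*x^17*y^9 - 2*x^17*y^7 + 1*x^17*y^6 + 1*x^17*y^5 + 2*x^17*y - 33868926*x^16*y^25 - 20842416*x^16*y^23 - 220706298*x^16*y^22 + 94721337*x^16*y^21 + 21586788*x^16*y^20 + 188636271*x^16*y^19 + 248682279*x^16*y^18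 + 74251107*x^16*y^17 - 180324117*x^16*y^16 - 120216078*x^16*y^15 - 1*x^16*y^10 + 1*x^16*y^6 - 1*x^16*y^4 + 1*x^16*y^3 + 1*x^16*y + 17740866*x^15*y^26 + 6451224*x^15*y^24 + 153464694*x^15*y^23 - 108740343*x^15*y^22 - 13894944*x^15*y^21 - 183301605*x^15*y^20 - 184914411*x^15*y^19 - 83679819*x^15*y^18 + 166181049*x^15*y^17 + 120216078*x^15*y^16 + 1*x^15*y^10 - 1*x^15*y^8 - 1*x^15*y^4 - 1*x^15*y^3 - 1*x^15*y^2 + 1*x^15*y + 1*x^15 - 8064030*x^14*y^27 - 95155554*x^14*y^24 + 96210081*x^14*y^23 + 13894944*x^14*y^22 + 157124523*x^14*y^21 + 119781861*x^14*y^20 + 79089525*x^14*y^19 - 135537735*x^14*y^18 - 106073010*x^14*y^17 + 1*x^14*y^11 + 1*x^14*y^5 - 2*x^14*y^2 + 2*x^14*y + 2*x^14 + 3155490*x^13*y^28 - 1682928*x^13*y^26 + 52381134*x^13*y^25 - 70227183*x^13*y^24 - 15534720*x^13*y^23 - 118789365*x^13*y^22 - 66807387*x^13*y^21 - 63829899*x^13*y^20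 + 97698825*x^13*y^19 + 82501230*x^13*y^18 + 1*x^13*y^11 - 1*x^13*y^10 - 1*x^13*y^9 + 1*x^13*y^8 + 1*x^13*y^7 + 1*x^13*y^6 - 1*x^13*y^5 + 1*x^13*y^4 + 1*x^13*y^3 + 1*x^13 - 1051830*x^12*y^29 + 1402440*x^12*y^27 - 25454286*x^12*y^26 + 43370457*x^12*y^25 + 15006108*x^12*y^24 + 79062555*x^12*y^23 + 31449717*x^12*y^22 + 44352165*x^12*y^21 - 62093031*x^12*y^20 - 56448210*x^12*y^19 + 1*x^12*y^11 - 1*x^12*y^4 + 1*x^12*y^3 - 1*x^12*y^2 + 1*x^12*y + 1*x^12 + 294512*x^11*y^30 - 757318*x^11*y^28 + 10840861*x^11*y^27 - 22880809*x^11*y^26 - 11892691*x^11*y^25 - 46175337*x^11*y^24 - 12025923*x^11*y^23 - 26611299*x^11*y^22 + 34675329*x^11*y^21 + 33868926*x^11*y^20 + 2*x^11*y^11 + 1*x^11*y^9 - 1*x^11*y^8 - 1*x^11*y^4 - 1*x^11*y^3 - 1*x^11*y^2 + 1*x^11*y - 67964*x^10*y^31 + 310694*x^10*y^29 - 4009900*x^10*y^28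 + 10331128*x^10*y^27 + 7754414*x^10*y^26 + 23553980*x^10*y^25 + 3400917*x^10*y^24 + 13778973*x^10*y^23 - 16934463*x^10*y^22 - 17740866*x^10*y^21 - 1*x^10*y^10 + 1*x^10*y^9 + 1*x^10*y^8 + 1*x^10*y^7 - 1*x^10*y^6 - 1*x^10*y^5 + 1*x^10*y^4 + 1*x^10*y^3 - 1*x^10*y + 1*x^10 + 12586*x^9*y^32 - 100689*x^9*y^30 + 1273344*x^9*y^29 - 3979514*x^9*y^28 - 4191498*x^9*y^27 - 10428221*x^9*y^26 - 469817*x^9*y^25 - 6135675*x^9*y^24 + 7187505*x^9*y^23 + 8064030*x^9*y^22 + 1*x^9*y^11 + 2*x^9*y^10 + 2*x^9*y^7 + 1*x^9*y^6 + 1*x^9*y^5 + 1*x^9 - 1798*x^8*y^33 + 25892*x^8*y^31 - 341980*x^8*y^30 + 1297975*x^8*y^29 + 1884303*x^8*y^28 + 3974479*x^8*y^27 - 163439*x^8*y^26 + 2335063*x^8*y^25 - 2629575*x^8*y^24 - 3155490*x^8*y^23 - 1*x^8*y^9 - 1*x^8*y^8 + 1*x^8*y^6 + 1*x^8*y^5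 - 1*x^8*y^4 - 2*x^8*y^2 + 1*x^8*y - 1*x^8 + 186*x^7*y^34 - 5208*x^7*y^32 + 76148*x^7*y^31 - 354200*x^7*y^30 - 702930*x^7*y^29 - 1290065*x^7*y^28 + 150852*x^7*y^27 - 752463*x^7*y^26 + 820427*x^7*y^25 + 1051830*x^7*y^24 + 1*x^7*y^11 + 1*x^7*y^9 - 1*x^7*y^8 + 1*x^7*y^7 + 1*x^7*y^5 + 1*x^7*y^4 + 1*x^7*y - 1*x^7 - 12*x^6*y^35 + 794*x^6*y^33 - 13677*x^6*y^32 + 79453*x^6*y^31 + 215858*x^6*y^30 + 351595*x^6*y^29 - 64909*x^6*y^28 + 202635*x^6*y^27 - 215221*x^6*y^26 - 294512*x^6*y^25 - 1*x^6*y^11 + 1*x^6*y^9 + 1*x^6*y^8 + 1*x^6*y^7 + 1*x^6*y^6 + 1*x^6*y^5 - 1*x^6*y^3 - 1*x^6*y - 87*x^5*y^34 + 1904*x^5*y^33 - 14278*x^5*y^32 - 53773*x^5*y^31 - 78933*x^5*y^30 + 19412*x^5*y^29 - 44771*x^5*y^28 + 46567*x^5*y^27 + 67963*x^5*y^26 +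 1*x^5*y^22 - 1*x^5*y^20 + 1*x^5*y^19 - 1*x^5*y^17 + 1*x^5*y^16 + 1*x^5*y^15 + 1*x^5*y^13 + 2*x^5*y^12 + 2*x^5*y^10 + 1*x^5*y^9 - 2*x^5*y^8 + 1*x^5*y^7 + 1*x^5*y^6 + 1*x^5*y^5 - 1*x^5*y - 1*x^5 + 7*x^4*y^35 - 193*x^4*y^34 + 1979*x^4*y^33 + 10614*x^4*y^32 + 14211*x^4*y^31 - 4296*x^4*y^30 + 7904*x^4*y^29 - 8090*x^4*y^28 - 12586*x^4*y^27 + 1*x^4*y^25 + 1*x^4*y^24 + 1*x^4*y^23 + 1*x^4*y^22 + 1*x^4*y^19 - 1*x^4*y^17 - 1*x^4*y^15 + 2*x^4*y^13 - 1*x^4*y^12 + 2*x^4*y^10 + 1*x^4*y^9 + 1*x^4*y^6 + 2*x^4*y^5 - 1*x^4*y^4 + 1*x^4*y^3 + 1*x^4*y + 13*x^3*y^35 - 198*x^3*y^34 - 1599*x^3*y^33 - 1972*x^3*y^32 + 701*x^3*y^31 - 1072*x^3*y^30 + 1085*x^3*y^29 + 1798*x^3*y^28 + 3*x^3*y^27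 + 1*x^3*y^26 + 1*x^3*y^22 - 1*x^3*y^21 - 1*x^3*y^20 - 1*x^3*y^19 - 2*x^3*y^18 - 1*x^3*y^16 - 2*x^3*y^15 - 1*x^3*y^14 - 1*x^3*y^13 - 1*x^3*y^12 - 2*x^3*y^11 + 1*x^3*y^7 + 2*x^3*y^6 + 2*x^3*y^5 - 1*x^3*y^3 + 1*x^3*y + 13*x^2*y^35 + 174*x^2*y^34 + 198*x^2*y^33 - 80*x^2*y^32 + 104*x^2*y^31 - 104*x^2*y^30 - 186*x^2*y^29 - 1*x^2*y^28 + 1*x^2*y^26 + 1*x^2*y^24 + 2*x^2*y^22 + 1*x^2*y^21 + 1*x^2*y^19 + 1*x^2*y^15 - 1*x^2*y^14 + 1*x^2*y^13 - 1*x^2*y^9 - 1*x^2*y^7 + 1*x^2*y^6 + 1*x^2*y^5 - 1*x^2*y^4 - 11*x*y^35 - 12*x*y^34 + 7*x*y^33 - 6*x*y^32 + 7*x*y^31 + 15*x*y^30 + 1*x*y^29 + 1*x*y^27 + 1*x*y^24 - 1*x*y^23 - 1*x*y^20 + 1*x*y^18 + 1*x*y^16 + 2*x*y^13 - 1*x*y^12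 + 1*x*y^10 - 2*x*y^9 - 1*x*y^7 - 1*x*y^6 - 2*x*y^4 + 1*x*y^3 + 1*x*y + 1*y^35 - 1*y^34 + 1*y^33 - 1*y^31 + 1*y^29 - 1*y^28 + 1*y^27 + 1*y^22 - 1*y^21 + 2*y^19 + 2*y^16 + 1*y^14 - 1*y^9 - 1*y^7 + 1*y^6 - 1*y^5 + 1*y^3 - 1*y^2 + 1*y + 1) * h5
  exact zero_ne_one h01

theorem stmt_7 {F : Type} [Field F] [Fintype F] (hcard : Fintype.card F = 125) :
    ¬ ∃ a : Fin 4 → F, Function.Injective a ∧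
        ∀ i j : Fin 4, i < j → ∃ c : F, c ≠ 0 ∧ a j - a i = c ^ 4 := by
  rintro ⟨a, hinj, h⟩
  have h5 : (5:F) = 0 := by
    have hch : CharP F (ringChar F) := ringChar.charP F
    have hp : (ringChar F).Prime := CharP.char_is_prime F _
    obtain ⟨n, -, hcc⟩ := FiniteField.card F (ringChar F)
    rw [hcard] at hcc
    have hdvd : ringChar F ∣ 5^3 := by
      rw [show (5:ℕ)^3 = 125 by norm_num, hcc]
      exact dvd_pow_self _ n.pos.ne'
    have h55 : ringChar F = 5 :=
      (Nat.prime_dvd_prime_iff_eq hp (by norm_num)).mp (hp.dvd_of_dvd_pow hdvd)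
    have := CharP.cast_eq_zero F (ringChar F)
    rwa [h55, Nat.cast_ofNat] at this
  have key : ∀ i j : Fin 4, i < j → (a j - a i)^31 = 1 := by
    intro i j hij
    obtain ⟨c, hc0, hc⟩ := h i j hij
    have hc124 : c ^ 124 = 1 := by
      have := FiniteField.pow_card_sub_one_eq_one c hc0
      rwa [hcard] at this
    rw [hc, ← pow_mul]
    exact hc124
  have hne : ∀ i j : Fin 4, i < j → a j - a i ≠ 0 := by
    intro i j hij hzero
    exact hij.ne' (hinj (sub_eq_zero.mp hzero))
  have hd : a 1 - a 0 ≠ 0 := hne 0 1 (by decide)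
  set d := a 1 - a 0 with hdd
  set x := (a 2 - a 0) / d with hx
  set y := (a 3 - a 0) / d with hy
  have hd31 : d ^ 31 = 1 := key 0 1 (by decide)
  have pow31 : ∀ u : F, u ≠ 0 → u^31 = 1 → (u / d)^31 = 1 := by
    intro u hu h31
    rw [div_pow, h31, hd31, div_one]
  have hx1 : x^31 = 1 := pow31 _ (hne 0 2 (by decide)) (key 0 2 (by decide))
  have hy1 : y^31 = 1 := pow31 _ (hne 0 3 (by decide)) (key 0 3 (by decide))
  have hx2 : (x - 1)^31 = 1 := by
    have : x - 1 = (a 2 - a 1) / d := by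
      field_simp [hx]
      simp only [hx, sub_mul, div_mul_cancel₀ _ hd, one_mul]; rw [hdd]; ring
    rw [this]
    exact pow31 _ (hne 1 2 (by decide)) (key 1 2 (by decide))
  have hy2 : (y - 1)^31 = 1 := by
    have : y - 1 = (a 3 - a 1) / d := by
      field_simp [hy]
      simp only [hy, sub_mul, div_mul_cancel₀ _ hd, one_mul]; rw [hdd]; ring
    rw [this]
    exact pow31 _ (hne 1 3 (by decide)) (key 1 3 (by decide))
  have hz : (y - x)^31 = 1 := by
    have : y - x = (a 3 - a 2) / d := by
      field_simp [hx, hy]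
      simp only [hx, hy, sub_mul, div_mul_cancel₀ _ hd]; ring
    rw [this]
    exact pow31 _ (hne 2 3 (by decide)) (key 2 3 (by decide))
  exact keyB h5 x y (keyA h5 x hx1 hx2) (keyA h5 y hy1 hy2) hz
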